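/- (Lemma 2.1) For any Hermitian X, Y ∈ ℂ^{n×n} with R_X and R_Y invertible, the identity X − R(X) = C_{T_Y}(X) − H_Y + K(Y,X) holds, where C_{T_Y}(X) = X − T_Y^H X̄ T_Y, K(Y,X) = (F_Y − F_X)^H R_X (F_Y − F_X), and H_Y = H + F_Y^H R F_Y. -/

import Mathlib

open Matrix Filter Topology
open scoped ComplexOrder

noncomputable section

namespace CDARE

variable {n m : ℕ}

/-- Entrywise complex conjugate of a matrix. -/
def mconj {p q : ℕ} (M : Matrix (Fin p) (Fin q) ℂ) : Matrix (Fin p) (Fin q) ℂ :=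
  M.map (starRingEnd ℂ)

/-- `hatM M = conj M * M`. -/
def hatM (M : Matrix (Fin n) (Fin n) ℂ) : Matrix (Fin n) (Fin n) ℂ := mconj M * M

/-- `R_X = R + Bᴴ X̄ B`. -/
def RX (R : Matrix (Fin m) (Fin m) ℂ) (B : Matrix (Fin n) (Fin m) ℂ)
    (X : Matrix (Fin n) (Fin n) ℂ) : Matrix (Fin m) (Fin m) ℂ :=
  R + Bᴴ * mconj X * B

/-- `F_X = R_X⁻¹ Bᴴ X̄ A`. -/
def FX (A : Matrix (Fin n) (Fin n) ℂ) (B : Matrix (Fin n) (Fin m) ℂ)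
    (R : Matrix (Fin m) (Fin m) ℂ) (X : Matrix (Fin n) (Fin n) ℂ) :
    Matrix (Fin m) (Fin n) ℂ :=
  (RX R B X)⁻¹ * (Bᴴ * mconj X * A)

/-- `T_X = A - B F_X`. -/
def TX (A : Matrix (Fin n) (Fin n) ℂ) (B : Matrix (Fin n) (Fin m) ℂ)
    (R : Matrix (Fin m) (Fin m) ℂ) (X : Matrix (Fin n) (Fin n) ℂ) :
    Matrix (Fin n) (Fin n) ℂ :=
  A - B * FX A B R X

/-- The Riccati operator `R(X)`. -/
def Rop (A : Matrix (Fin n) (Fin n) ℂ) (B : Matrix (Fin n) (Fin m) ℂ)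
    (R : Matrix (Fin m) (Fin m) ℂ) (H : Matrix (Fin n) (Fin n) ℂ)
    (X : Matrix (Fin n) (Fin n) ℂ) : Matrix (Fin n) (Fin n) ℂ :=
  Aᴴ * mconj X * A - Aᴴ * mconj X * B * (RX R B X)⁻¹ * (Bᴴ * mconj X * A) + H

/-- `H_X = H + F_Xᴴ R F_X`. -/
def HX (A : Matrix (Fin n) (Fin n) ℂ) (B : Matrix (Fin n) (Fin m) ℂ)
    (R : Matrix (Fin m) (Fin m) ℂ) (H : Matrix (Fin n) (Fin n) ℂ)
    (X : Matrix (Fin n) (Fin n) ℂ) : Matrix (Fin n) (Fin n) ℂ :=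
  H + (FX A B R X)ᴴ * R * FX A B R X

/-- `K(Y, X) = (F_Y - F_X)ᴴ R_X (F_Y - F_X)`. -/
def Kop (A : Matrix (Fin n) (Fin n) ℂ) (B : Matrix (Fin n) (Fin m) ℂ)
    (R : Matrix (Fin m) (Fin m) ℂ) (Y X : Matrix (Fin n) (Fin n) ℂ) :
    Matrix (Fin n) (Fin n) ℂ :=
  (FX A B R Y - FX A B R X)ᴴ * RX R B X * (FX A B R Y - FX A B R X)

/-- Conjugate Stein operator `C_C(X) = X - Cᴴ X̄ C`. -/
def CStein (C X : Matrix (Fin n) (Fin n) ℂ) : Matrix (Fin n) (Fin n) ℂ :=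
  X - Cᴴ * mconj X * C

/-- The set `S_≥`. -/
def Sge (A : Matrix (Fin n) (Fin n) ℂ) (B : Matrix (Fin n) (Fin m) ℂ)
    (R : Matrix (Fin m) (Fin m) ℂ) (H : Matrix (Fin n) (Fin n) ℂ) :
    Set (Matrix (Fin n) (Fin n) ℂ) :=
  {X | X.IsHermitian ∧ ∃ XT : Matrix (Fin n) (Fin n) ℂ, XT.IsHermitian ∧
      IsUnit (RX R B XT) ∧ spectralRadius ℂ (hatM (TX A B R XT)) < 1 ∧
      (CStein (TX A B R XT) X - HX A B R H XT).PosSemidef}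

/-- Lemma 2.1: `X - R(X) = C_{T_Y}(X) - H_Y + K(Y, X)`. -/
theorem lemma_2_1 (n m : ℕ) (A : Matrix (Fin n) (Fin n) ℂ) (B : Matrix (Fin n) (Fin m) ℂ)
    (R : Matrix (Fin m) (Fin m) ℂ) (H : Matrix (Fin n) (Fin n) ℂ)
    (hR : R.IsHermitian) (hRunit : IsUnit R) (hH : H.IsHermitian)
    (X Y : Matrix (Fin n) (Fin n) ℂ) (hX : X.IsHermitian) (hY : Y.IsHermitian)
    (hRX : IsUnit (RX R B X)) (hRY : IsUnit (RX R B Y)) :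
    X - Rop A B R H X =
      CStein (TX A B R Y) X - HX A B R H Y + Kop A B R Y X := by
  have hXC : (mconj X)ᴴ = mconj X := by
    ext i j
    simp only [mconj, Matrix.conjTranspose_apply, Matrix.map_apply, starRingEnd_apply,
      star_star]
    exact (congrFun (congrFun hX j) i).symm
  set XC := mconj X with hXCdef
  set S := RX R B X with hSdef
  set F := FX A B R X with hFdef
  set G := FX A B R Y with hGdef
  have hS : Sᴴ = S := by
    simp [hSdef, RX, Matrix.conjTranspose_add, Matrix.conjTranspose_mul, hXC, hR.eq,
      Matrix.mul_assoc]
    rw [← hXCdef, hXC]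
  have hSdet : IsUnit S.det := (Matrix.isUnit_iff_isUnit_det S).mp hRX
  have hSF : S * F = Bᴴ * XC * A := by
    rw [hFdef, FX, ← hSdef, ← hXCdef, ← Matrix.mul_assoc, Matrix.mul_nonsing_inv _ hSdet,
      Matrix.one_mul]
  have hFS : Fᴴ * S = Aᴴ * XC * B := by
    have := congrArg Matrix.conjTranspose hSF
    simpa [Matrix.conjTranspose_mul, hS, hXC, Matrix.mul_assoc] using this
  have hBXB : Bᴴ * XC * B = S - R := by
    simp [hSdef, RX, ← hXCdef]
  have hFeq : F = S⁻¹ * (Bᴴ * XC * A) := rfl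
  have hRop : Rop A B R H X = Aᴴ * XC * A - Fᴴ * S * F + H := by
    rw [Rop, ← hXCdef, ← hSdef, Matrix.mul_assoc (Aᴴ * XC * B), ← hFeq, ← hFS]
  rw [hRop, CStein, TX, ← hXCdef, ← hGdef, HX, Kop, ← hGdef, ← hFdef, ← hSdef]
  have expand1 : (A - B * G)ᴴ * XC * (A - B * G) =
      Aᴴ * XC * A - Gᴴ * (S * F) - Fᴴ * S * G + Gᴴ * (S - R) * G := by
    rw [hSF, ← hBXB, hFS]
    simp only [Matrix.conjTranspose_sub, Matrix.conjTranspose_mul]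
    simp only [Matrix.sub_mul, Matrix.mul_sub, Matrix.mul_assoc]
    abel
  have expand2 : (G - F)ᴴ * S * (G - F) =
      Gᴴ * S * G - Gᴴ * (S * F) - Fᴴ * S * G + Fᴴ * S * F := by
    simp only [Matrix.conjTranspose_sub, Matrix.sub_mul, Matrix.mul_sub, Matrix.mul_assoc]
    abel
  rw [expand1, expand2]
  simp only [Matrix.sub_mul, Matrix.mul_sub, Matrix.mul_assoc]
  abel

end CDARE
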